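/- Let ω₁, ω₂ be positive integers with ω₁ ≠ ω₂, ω₁ ≠ 2ω₂ and ω₂ ≠ 2ω₁, and let a₂ ≠ 0 and a₁ be real perturbation amplitudes. Then for every fixed pair (θ̂₁, θ̂₂) ∈ ℝ², the average over one period of the demodulated payoff of player 2 equals the pseudogradient of J₂, namely: (1/(2π)) ∫₀^{2π} (2/a₂) sin(ω₂ t) · J₂(θ̂₁ + a₁ sin(ω₁ t), θ̂₂ + a₂ sin(ω₂ t)) dt = H²₂₁ θ̂₁ + H²₂₂ θ̂₂ + h²₂. -/
import Mathlib

open Real intervalIntegral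

lemma intSin (k : ℤ) : ∫ t in (0:ℝ)..(2*π), Real.sin (k * t) = 0 := by
  rcases eq_or_ne k 0 with hk | hk
  · simp [hk]
  · have hk' : (k:ℝ) ≠ 0 := Int.cast_ne_zero.mpr hk
    rw [intervalIntegral.integral_comp_mul_left Real.sin hk', integral_sin]
    simp [Real.cos_int_mul_two_pi]

lemma intCos (k : ℤ) (hk : k ≠ 0) : ∫ t in (0:ℝ)..(2*π), Real.cos (k * t) = 0 := by
  have hk' : (k:ℝ) ≠ 0 := Int.cast_ne_zero.mpr hk
  rw [intervalIntegral.integral_comp_mul_left Real.cos hk', integral_cos]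
  have h2 : (k:ℝ) * (2*π) = ((2*k : ℤ):ℝ) * π := by push_cast; ring
  rw [show (k:ℝ) * 0 = 0 by ring, Real.sin_zero, h2, Real.sin_int_mul_pi]
  simp

lemma intSC (j k : ℤ) : ∫ t in (0:ℝ)..(2*π), Real.sin (j * t) * Real.cos (k * t) = 0 := by
  have key : ∀ t : ℝ, Real.sin (j * t) * Real.cos (k * t)
      = (Real.sin (((j+k : ℤ):ℝ) * t) + Real.sin (((j-k : ℤ):ℝ) * t)) / 2 := by
    intro t
    have h1 : ((j+k : ℤ):ℝ) * t = (j:ℝ)*t + (k:ℝ)*t := by push_cast; ring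
    have h2 : ((j-k : ℤ):ℝ) * t = (j:ℝ)*t - (k:ℝ)*t := by push_cast; ring
    rw [h1, h2, Real.sin_add, Real.sin_sub]; ring
  rw [intervalIntegral.integral_congr (fun t _ => key t)]
  have i1 : IntervalIntegrable (fun t : ℝ => Real.sin (((j+k : ℤ):ℝ) * t)) MeasureTheory.volume 0 (2*π) :=
    by apply Continuous.intervalIntegrable; fun_prop
  have i2 : IntervalIntegrable (fun t : ℝ => Real.sin (((j-k : ℤ):ℝ) * t)) MeasureTheory.volume 0 (2*π) :=
    by apply Continuous.intervalIntegrable; fun_prop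
  rw [intervalIntegral.integral_div, intervalIntegral.integral_add i1 i2, intSin, intSin]
  norm_num

lemma intSS (n m : ℕ) (h : n ≠ m) :
    ∫ t in (0:ℝ)..(2*π), Real.sin (n * t) * Real.sin (m * t) = 0 := by
  have key : ∀ t : ℝ, Real.sin (n * t) * Real.sin (m * t)
      = (Real.cos (((n - m : ℤ) :ℝ) * t) - Real.cos (((n + m : ℤ) :ℝ) * t)) / 2 := by
    intro t
    have h1 : ((n - m : ℤ):ℝ) * t = (n:ℝ)*t - (m:ℝ)*t := by push_cast; ring
    have h2 : ((n + m : ℤ):ℝ) * t = (n:ℝ)*t + (m:ℝ)*t := by push_cast; ring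
    rw [h1, h2, Real.cos_sub, Real.cos_add]; ring
  rw [intervalIntegral.integral_congr (fun t _ => key t)]
  have i1 : IntervalIntegrable (fun t : ℝ => Real.cos (((n - m : ℤ):ℝ) * t)) MeasureTheory.volume 0 (2*π) :=
    by apply Continuous.intervalIntegrable; fun_prop
  have i2 : IntervalIntegrable (fun t : ℝ => Real.cos (((n + m : ℤ):ℝ) * t)) MeasureTheory.volume 0 (2*π) :=
    by apply Continuous.intervalIntegrable; fun_prop
  have e1 : (n:ℤ) - m ≠ 0 := by omega
  have e2 : (n:ℤ) + m ≠ 0 := by omega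
  rw [intervalIntegral.integral_div, intervalIntegral.integral_sub i1 i2,
    intCos _ e1, intCos _ e2]
  all_goals norm_num

lemma intSsq (m : ℕ) (hm : 0 < m) :
    ∫ t in (0:ℝ)..(2*π), Real.sin (m * t) ^ 2 = π := by
  have key : ∀ t : ℝ, Real.sin (m * t) ^ 2
      = 1/2 - Real.cos (((2*(m:ℤ) : ℤ):ℝ) * t) / 2 := by
    intro t
    have h1 : ((2*(m:ℤ) : ℤ):ℝ) * t = 2 * ((m:ℝ)*t) := by push_cast; ring
    rw [h1, Real.sin_sq_eq_half_sub]
  rw [intervalIntegral.integral_congr (fun t _ => key t)]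
  have i1 : IntervalIntegrable (fun _ : ℝ => (1:ℝ)/2) MeasureTheory.volume 0 (2*π) :=
    by apply Continuous.intervalIntegrable; fun_prop
  have i2 : IntervalIntegrable (fun t : ℝ => Real.cos (((2*(m:ℤ) : ℤ):ℝ) * t) / 2) MeasureTheory.volume 0 (2*π) :=
    by apply Continuous.intervalIntegrable; fun_prop
  have e1 : (2*(m:ℤ) : ℤ) ≠ 0 := by omega
  rw [intervalIntegral.integral_sub i1 i2, intervalIntegral.integral_div,
    intervalIntegral.integral_div, intCos _ e1]
  all_goals simp

lemma intSqS (n m : ℕ) :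
    ∫ t in (0:ℝ)..(2*π), Real.sin (n * t) ^ 2 * Real.sin (m * t) = 0 := by
  have key : ∀ t : ℝ, Real.sin (n * t) ^ 2 * Real.sin (m * t)
      = Real.sin ((((m:ℤ) : ℤ):ℝ) * t) / 2
        - Real.sin ((((m:ℤ) : ℤ):ℝ) * t) * Real.cos (((2*(n:ℤ) : ℤ):ℝ) * t) / 2 := by
    intro t
    have h1 : ((2*(n:ℤ) : ℤ):ℝ) * t = 2 * ((n:ℝ)*t) := by push_cast; ring
    have h2 : (((m:ℤ) : ℤ):ℝ) * t = (m:ℝ) * t := by push_cast; ring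
    have h3 : Real.sin (n*t) ^ 2 = 1/2 - Real.cos (2*((n:ℝ)*t)) / 2 := by
      rw [Real.sin_sq_eq_half_sub]
    rw [h1, h2, h3]; ring
  rw [intervalIntegral.integral_congr (fun t _ => key t)]
  have i1 : IntervalIntegrable (fun t : ℝ => Real.sin ((((m:ℤ) : ℤ):ℝ) * t) / 2) MeasureTheory.volume 0 (2*π) :=
    by apply Continuous.intervalIntegrable; fun_prop
  have i2 : IntervalIntegrable (fun t : ℝ => Real.sin ((((m:ℤ) : ℤ):ℝ) * t) * Real.cos (((2*(n:ℤ) : ℤ):ℝ) * t) / 2) MeasureTheory.volume 0 (2*π) :=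
    by apply Continuous.intervalIntegrable; fun_prop
  rw [intervalIntegral.integral_sub i1 i2, intervalIntegral.integral_div,
    intervalIntegral.integral_div, intSin, intSC]
  all_goals norm_num

lemma intSSq (n m : ℕ) :
    ∫ t in (0:ℝ)..(2*π), Real.sin (n * t) * Real.sin (m * t) ^ 2 = 0 := by
  have key : ∀ t : ℝ, Real.sin (n * t) * Real.sin (m * t) ^ 2
      = Real.sin (m * t) ^ 2 * Real.sin (n * t) := by intro t; ring
  rw [intervalIntegral.integral_congr (fun t _ => key t), intSqS]

/-- the average over one period of player 2's demodulated payoff equals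
the second component of the pseudogradient, `H²₂₁ θ̂₁ + H²₂₂ θ̂₂ + h²₂`. -/
theorem average_demodulated_payoff_player2
    (ω1 ω2 : ℕ) (hω1 : 0 < ω1) (hω2 : 0 < ω2)
    (hne : ω1 ≠ ω2) (hne12 : ω1 ≠ 2 * ω2) (hne21 : ω2 ≠ 2 * ω1)
    (a1 a2 : ℝ) (ha2 : a2 ≠ 0)
    (H211 H222 H221 h21 h22 c2 θ1 θ2 : ℝ) :
    (1 / (2 * π)) * ∫ t in (0 : ℝ)..(2 * π),
        (2 / a2) * Real.sin ((ω2 : ℝ) * t) *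
          ((H211 / 2) * (θ1 + a1 * Real.sin ((ω1 : ℝ) * t)) ^ 2
            + (H222 / 2) * (θ2 + a2 * Real.sin ((ω2 : ℝ) * t)) ^ 2
            + H221 * (θ1 + a1 * Real.sin ((ω1 : ℝ) * t)) * (θ2 + a2 * Real.sin ((ω2 : ℝ) * t))
            + h21 * (θ1 + a1 * Real.sin ((ω1 : ℝ) * t))
            + h22 * (θ2 + a2 * Real.sin ((ω2 : ℝ) * t)) + c2)
      = H221 * θ1 + H222 * θ2 + h22 := by
  set c0 : ℝ := (2/a2) * ((H211/2)*θ1^2 + (H222/2)*θ2^2 + H221*θ1*θ2 + h21*θ1 + h22*θ2 + c2) with hc0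
  set cA : ℝ := (2/a2) * a1 * (H211*θ1 + H221*θ2 + h21) with hcA
  set cB : ℝ := (2/a2) * a2 * (H222*θ2 + H221*θ1 + h22) with hcB
  set cC : ℝ := (2/a2) * (H211/2) * a1^2 with hcC
  set cD : ℝ := (2/a2) * H221 * a1 * a2 with hcD
  set cE : ℝ := (2/a2) * (H222/2) * a2^2 with hcE
  have key : ∀ t : ℝ,
      (2 / a2) * Real.sin ((ω2 : ℝ) * t) *
          ((H211 / 2) * (θ1 + a1 * Real.sin ((ω1 : ℝ) * t)) ^ 2
            + (H222 / 2) * (θ2 + a2 * Real.sin ((ω2 : ℝ) * t)) ^ 2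
            + H221 * (θ1 + a1 * Real.sin ((ω1 : ℝ) * t)) * (θ2 + a2 * Real.sin ((ω2 : ℝ) * t))
            + h21 * (θ1 + a1 * Real.sin ((ω1 : ℝ) * t))
            + h22 * (θ2 + a2 * Real.sin ((ω2 : ℝ) * t)) + c2)
      = c0 * Real.sin ((ω2:ℝ) * t)
        + cA * (Real.sin ((ω1:ℝ) * t) * Real.sin ((ω2:ℝ) * t))
        + cB * Real.sin ((ω2:ℝ) * t) ^ 2
        + cC * (Real.sin ((ω1:ℝ) * t) ^ 2 * Real.sin ((ω2:ℝ) * t))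
        + cD * (Real.sin ((ω1:ℝ) * t) * Real.sin ((ω2:ℝ) * t) ^ 2)
        + cE * (Real.sin ((ω2:ℝ) * t) * Real.sin ((ω2:ℝ) * t) ^ 2) := by
    intro t
    rw [hc0, hcA, hcB, hcC, hcD, hcE]
    ring
  rw [intervalIntegral.integral_congr (fun t _ => key t)]
  have i0 : IntervalIntegrable (fun t : ℝ => c0 * Real.sin ((ω2:ℝ) * t)) MeasureTheory.volume 0 (2*π) :=
    by apply Continuous.intervalIntegrable; fun_prop
  have iA : IntervalIntegrable (fun t : ℝ => cA * (Real.sin ((ω1:ℝ) * t) * Real.sin ((ω2:ℝ) * t))) MeasureTheory.volume 0 (2*π) :=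
    by apply Continuous.intervalIntegrable; fun_prop
  have iB : IntervalIntegrable (fun t : ℝ => cB * Real.sin ((ω2:ℝ) * t) ^ 2) MeasureTheory.volume 0 (2*π) :=
    by apply Continuous.intervalIntegrable; fun_prop
  have iC : IntervalIntegrable (fun t : ℝ => cC * (Real.sin ((ω1:ℝ) * t) ^ 2 * Real.sin ((ω2:ℝ) * t))) MeasureTheory.volume 0 (2*π) :=
    by apply Continuous.intervalIntegrable; fun_prop
  have iD : IntervalIntegrable (fun t : ℝ => cD * (Real.sin ((ω1:ℝ) * t) * Real.sin ((ω2:ℝ) * t) ^ 2)) MeasureTheory.volume 0 (2*π) :=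
    by apply Continuous.intervalIntegrable; fun_prop
  have iE : IntervalIntegrable (fun t : ℝ => cE * (Real.sin ((ω2:ℝ) * t) * Real.sin ((ω2:ℝ) * t) ^ 2)) MeasureTheory.volume 0 (2*π) :=
    by apply Continuous.intervalIntegrable; fun_prop
  rw [intervalIntegral.integral_add (((((i0.add iA).add iB).add iC).add iD)) iE,
      intervalIntegral.integral_add ((((i0.add iA).add iB).add iC)) iD,
      intervalIntegral.integral_add (((i0.add iA).add iB)) iC,
      intervalIntegral.integral_add ((i0.add iA)) iB,
      intervalIntegral.integral_add i0 iA]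
  rw [intervalIntegral.integral_const_mul, intervalIntegral.integral_const_mul,
      intervalIntegral.integral_const_mul, intervalIntegral.integral_const_mul,
      intervalIntegral.integral_const_mul, intervalIntegral.integral_const_mul]
  have e0 : ∫ t in (0:ℝ)..(2*π), Real.sin ((ω2:ℝ) * t) = 0 := by
    have := intSin (ω2:ℤ); push_cast at this; exact this
  have eA : ∫ t in (0:ℝ)..(2*π), Real.sin ((ω1:ℝ) * t) * Real.sin ((ω2:ℝ) * t) = 0 :=
    intSS ω1 ω2 hne
  have eB : ∫ t in (0:ℝ)..(2*π), Real.sin ((ω2:ℝ) * t) ^ 2 = π := intSsq ω2 hω2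
  have eC : ∫ t in (0:ℝ)..(2*π), Real.sin ((ω1:ℝ) * t) ^ 2 * Real.sin ((ω2:ℝ) * t) = 0 := by
    have := intSqS ω1 ω2; push_cast at this; exact this
  have eD : ∫ t in (0:ℝ)..(2*π), Real.sin ((ω1:ℝ) * t) * Real.sin ((ω2:ℝ) * t) ^ 2 = 0 :=
    intSSq ω1 ω2
  have eE : ∫ t in (0:ℝ)..(2*π), Real.sin ((ω2:ℝ) * t) * Real.sin ((ω2:ℝ) * t) ^ 2 = 0 :=
    intSSq ω2 ω2
  rw [e0, eA, eB, eC, eD, eE]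
  have hπ : π ≠ 0 := Real.pi_ne_zero
  rw [hcB]
  field_simp
  ring
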